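/- Let a, b, c, d, e ∈ ℂ with ad − bc ≠ 0 and e ≠ 0, let Ω ⊆ ℂ be an open set on which ct + d ≠ 0, and set λ(t) = (at+b)/(ct+d) and μ(t) = e/(ct+d)³. Suppose q₀ : Ω → ℂ is analytic, u : Ω → ℂ is analytic and satisfies u⁗(t) + q₀(t)·u(t) = 0 for all t ∈ Ω, and suppose U and Q₀ are analytic functions on the open set λ(Ω) satisfying U(λ(t)) = μ(t)·u(t) and Q₀(λ(t)) = q₀(t)·(ct+d)⁸/(ad−bc)⁴ for all t ∈ Ω. Then U⁗(λ(t)) + Q₀(λ(t))·U(λ(t)) = 0 for all t ∈ Ω. (That is, the Laguerre–Forsyth form u⁗ + q₀u = 0 of a linear 4th-order ODE is preserved by the residual transformations (t,u) ↦ ((at+b)/(ct+d), e·u/(ct+d)³), with the coefficient q₀ transforming as a relative invariant of weight 4.) -/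

import Mathlib

open Complex

/-- The Laguerre–Forsyth form `u⁗ + q₀·u = 0` of a linear 4th-order ODE is preserved by
the residual transformations `(t, u) ↦ ((at+b)/(ct+d), e·u/(ct+d)³)`, with the
coefficient `q₀` transforming as a relative invariant of weight 4. -/
theorem laguerre_forsyth_invariance
    (a b c d e : ℂ) (had : a * d - b * c ≠ 0) (he : e ≠ 0)
    (Ω : Set ℂ) (hΩ : IsOpen Ω) (hcd : ∀ t ∈ Ω, c * t + d ≠ 0)
    (lam mu : ℂ → ℂ)
    (hlam : ∀ t, lam t = (a * t + b) / (c * t + d))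
    (hmu : ∀ t, mu t = e / (c * t + d) ^ 3)
    (q₀ u : ℂ → ℂ)
    (hq₀ : AnalyticOnNhd ℂ q₀ Ω) (hu : AnalyticOnNhd ℂ u Ω)
    (hode : ∀ t ∈ Ω, iteratedDeriv 4 u t + q₀ t * u t = 0)
    (U Q₀ : ℂ → ℂ)
    (hUan : AnalyticOnNhd ℂ U (lam '' Ω)) (hQ₀an : AnalyticOnNhd ℂ Q₀ (lam '' Ω))
    (hU : ∀ t ∈ Ω, U (lam t) = mu t * u t)
    (hQ₀ : ∀ t ∈ Ω, Q₀ (lam t) = q₀ t * (c * t + d) ^ 8 / (a * d - b * c) ^ 4) :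
    ∀ t ∈ Ω, iteratedDeriv 4 U (lam t) + Q₀ (lam t) * U (lam t) = 0 := by
  have hwdd : ∀ s : ℂ, HasDerivAt (fun x => c * x + d) c s := by
    intro s
    simpa using ((hasDerivAt_id s).const_mul c).add_const d
  -- derivative of lam
  have hlamd : ∀ s ∈ Ω, HasDerivAt lam ((a * d - b * c) / (c * s + d) ^ 2) s := by
    intro s hs
    have hne := hcd s hs
    have h1 : HasDerivAt (fun x => (a * x + b) / (c * x + d))
        ((a * (c * s + d) - (a * s + b) * c) / (c * s + d) ^ 2) s := by
      have hnum : HasDerivAt (fun x => a * x + b) a s := by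
        simpa using ((hasDerivAt_id s).const_mul a).add_const b
      exact hnum.div (hwdd s) hne
    have hval : a * (c * s + d) - (a * s + b) * c = a * d - b * c := by ring
    have hfun : lam = fun x => (a * x + b) / (c * x + d) := funext hlam
    rw [hfun]
    rwa [hval] at h1
  -- key transfer lemma
  have key : ∀ V g : ℂ → ℂ, AnalyticOnNhd ℂ V (lam '' Ω) → (∀ s ∈ Ω, V (lam s) = g s) →
      ∀ s ∈ Ω, deriv V (lam s) = deriv g s * (c * s + d) ^ 2 / (a * d - b * c) := by
    intro V g hVan hVg s hs
    have hne := hcd s hs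
    have hVd : DifferentiableAt ℂ V (lam s) :=
      (hVan (lam s) ⟨s, hs, rfl⟩).differentiableAt
    have hcomp : deriv (V ∘ lam) s = deriv V (lam s) * ((a * d - b * c) / (c * s + d) ^ 2) := by
      rw [deriv_comp (x := s) hVd (hlamd s hs).differentiableAt, (hlamd s hs).deriv]
    have heq : (V ∘ lam) =ᶠ[nhds s] g := by
      filter_upwards [hΩ.mem_nhds hs] with x hx
      exact hVg x hx
    have h2 : deriv g s = deriv V (lam s) * ((a * d - b * c) / (c * s + d) ^ 2) := by
      rw [← heq.deriv_eq, hcomp]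
    rw [h2]
    field_simp
  have hu1 : AnalyticOnNhd ℂ (deriv u) Ω := hu.deriv
  have hu2 : AnalyticOnNhd ℂ (deriv (deriv u)) Ω := hu1.deriv
  have hu3 : AnalyticOnNhd ℂ (deriv (deriv (deriv u))) Ω := hu2.deriv
  -- pushforward stages
  set g0 : ℂ → ℂ := fun x => e / (c * x + d) ^ 3 * u x with hg0def
  set g1 : ℂ → ℂ := fun x =>
    e * (deriv u x * (c * x + d) - 3 * c * u x) / ((a * d - b * c) * (c * x + d) ^ 2)
    with hg1def
  set g2 : ℂ → ℂ := fun x =>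
    e * (deriv (deriv u) x * (c * x + d) ^ 2 - 4 * c * (deriv u x * (c * x + d))
        + 6 * c ^ 2 * u x) / ((a * d - b * c) ^ 2 * (c * x + d)) with hg2def
  set g3 : ℂ → ℂ := fun x =>
    e * (deriv (deriv (deriv u)) x * (c * x + d) ^ 3
        - 3 * c * (deriv (deriv u) x * (c * x + d) ^ 2)
        + 6 * c ^ 2 * (deriv u x * (c * x + d)) - 6 * c ^ 3 * u x) / (a * d - b * c) ^ 3
    with hg3def
  have hUg0 : ∀ s ∈ Ω, U (lam s) = g0 s := by
    intro s hs
    rw [hU s hs, hmu s, hg0def]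
  -- step 1
  have hUg1 : ∀ s ∈ Ω, deriv U (lam s) = g1 s := by
    intro s hs
    have hne := hcd s hs
    have hd0 := ((hasDerivAt_const s e).div ((hwdd s).pow 3) (pow_ne_zero 3 hne)).mul
      (hu s hs).differentiableAt.hasDerivAt
    rw [key U g0 hUan hUg0 s hs, (show deriv g0 s = _ from hd0.deriv), hg1def]
    simp only [Pi.pow_apply, Pi.mul_apply, Pi.div_apply, Pi.sub_apply, Pi.add_apply]
    norm_num
    field_simp
    ring
  -- step 2
  have hUg2 : ∀ s ∈ Ω, deriv (deriv U) (lam s) = g2 s := by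
    intro s hs
    have hne := hcd s hs
    have hd1 := ((((hu1 s hs).differentiableAt.hasDerivAt.mul (hwdd s)).sub
        ((hu s hs).differentiableAt.hasDerivAt.const_mul (3 * c))).const_mul e).div
      (((hwdd s).pow 2).const_mul (a * d - b * c))
      (mul_ne_zero had (pow_ne_zero 2 hne))
    rw [key (deriv U) g1 hUan.deriv hUg1 s hs, (show deriv g1 s = _ from hd1.deriv), hg2def]
    simp only [Pi.pow_apply, Pi.mul_apply, Pi.div_apply, Pi.sub_apply, Pi.add_apply]
    norm_num
    field_simp
    ring
  -- step 3
  have hUg3 : ∀ s ∈ Ω, deriv (deriv (deriv U)) (lam s) = g3 s := by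
    intro s hs
    have hne := hcd s hs
    have hd2 := (((((hu2 s hs).differentiableAt.hasDerivAt.mul ((hwdd s).pow 2)).sub
        (((hu1 s hs).differentiableAt.hasDerivAt.mul (hwdd s)).const_mul (4 * c))).add
        ((hu s hs).differentiableAt.hasDerivAt.const_mul (6 * c ^ 2))).const_mul e).div
      ((hwdd s).const_mul ((a * d - b * c) ^ 2))
      (mul_ne_zero (pow_ne_zero 2 had) hne)
    rw [key (deriv (deriv U)) g2 hUan.deriv.deriv hUg2 s hs, (show deriv g2 s = _ from hd2.deriv), hg3def]
    simp only [Pi.pow_apply, Pi.mul_apply, Pi.div_apply, Pi.sub_apply, Pi.add_apply]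
    norm_num
    field_simp
    ring
  -- step 4
  have hUg4 : ∀ s ∈ Ω, deriv (deriv (deriv (deriv U))) (lam s)
      = e * deriv (deriv (deriv (deriv u))) s * (c * s + d) ^ 5 / (a * d - b * c) ^ 4 := by
    intro s hs
    have hne := hcd s hs
    have ht3 := (hu3 s hs).differentiableAt.hasDerivAt.mul ((hwdd s).pow 3)
    have ht2 := ((hu2 s hs).differentiableAt.hasDerivAt.mul ((hwdd s).pow 2)).const_mul (3 * c)
    have ht1 := ((hu1 s hs).differentiableAt.hasDerivAt.mul (hwdd s)).const_mul (6 * c ^ 2)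
    have ht0 := (hu s hs).differentiableAt.hasDerivAt.const_mul (6 * c ^ 3)
    have hd3 := ((((ht3.sub ht2).add ht1).sub ht0).const_mul e).div_const ((a * d - b * c) ^ 3)
    rw [key (deriv (deriv (deriv U))) g3 hUan.deriv.deriv.deriv hUg3 s hs, (show deriv g3 s = _ from hd3.deriv)]
    simp only [Pi.pow_apply, Pi.mul_apply, Pi.div_apply, Pi.sub_apply, Pi.add_apply]
    norm_num
    field_simp
    ring
  intro t ht
  have hne := hcd t ht
  have h4U : iteratedDeriv 4 U (lam t) = deriv (deriv (deriv (deriv U))) (lam t) := by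
    simp [iteratedDeriv_succ, iteratedDeriv_zero]
  have h4u : iteratedDeriv 4 u t = deriv (deriv (deriv (deriv u))) t := by
    simp [iteratedDeriv_succ, iteratedDeriv_zero]
  have hode' : deriv (deriv (deriv (deriv u))) t = -(q₀ t * u t) := by
    have := hode t ht
    rw [h4u] at this
    linear_combination this
  rw [h4U, hUg4 t ht, hQ₀ t ht, hUg0 t ht, hg0def, hode']
  field_simp
  ring
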